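/- For Epstein models M = ⟨v, R⟩ and N = ⟨v', R'⟩: N ∈ S^M if and only if Th(M) = Th(N), where Th(M) = {φ : M ⊨ φ}. Hence S^M equals the equivalence class of M under theoretical equivalence. -/
import Mathlib


/-- Epstein formulas: letters, ¬, ∨, ∧, →, ↔, △ (tri), ↪ (hook). -/
inductive EFor : Type
  | var : ℕ → EFor
  | neg : EFor → EFor
  | or : EFor → EFor → EFor
  | and : EFor → EFor → EFor
  | imp : EFor → EFor → EFor
  | iff : EFor → EFor → EFor
  | tri : EFor → EFor → EFor
  | hook : EFor → EFor → EFor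
  deriving DecidableEq

/-- An Epstein model: a valuation of letters and a binary relation on formulas. -/
structure EModel : Type where
  v : ℕ → Prop
  R : Set (EFor × EFor)

/-- Epstein satisfaction. -/
def sat (M : EModel) : EFor → Prop
  | .var n => M.v n
  | .neg φ => ¬ sat M φ
  | .or φ ψ => sat M φ ∨ sat M ψ
  | .and φ ψ => sat M φ ∧ sat M ψ
  | .imp φ ψ => sat M φ → sat M ψ
  | .iff φ ψ => (sat M φ ↔ sat M ψ)
  | .tri φ ψ => (sat M φ ∧ sat M ψ) ∧ (φ, ψ) ∈ M.R
  | .hook φ ψ => (sat M φ → sat M ψ) ∧ (φ, ψ) ∈ M.R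

/-- The Omega set of a model. -/
def Omega (M : EModel) : Set (EFor × EFor) :=
  {p | ¬ sat M (.imp p.1 p.2)}

/-- The S-set of a model. -/
def Sset (M : EModel) : Set EModel :=
  {N | N.v = M.v ∧ M.R \ Omega M ⊆ N.R ∧ N.R ⊆ M.R ∪ Omega M}

/-- The theory of a model. -/
def Th (M : EModel) : Set EFor := {φ | sat M φ}

/-- Substitution: extend a map on letters homomorphically. -/
def esubst (σ : ℕ → EFor) : EFor → EFor
  | .var n => σ n
  | .neg φ => .neg (esubst σ φ)
  | .or φ ψ => .or (esubst σ φ) (esubst σ ψ)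
  | .and φ ψ => .and (esubst σ φ) (esubst σ ψ)
  | .imp φ ψ => .imp (esubst σ φ) (esubst σ ψ)
  | .iff φ ψ => .iff (esubst σ φ) (esubst σ ψ)
  | .tri φ ψ => .tri (esubst σ φ) (esubst σ ψ)
  | .hook φ ψ => .hook (esubst σ φ) (esubst σ ψ)

/-- A boolean homomorphism: any assignment respecting the boolean connectives
(no constraint on △, ↪, which are treated as atoms). -/
def BoolHom (w : EFor → Prop) : Prop :=
  (∀ φ, w (.neg φ) ↔ ¬ w φ) ∧
  (∀ φ ψ, w (.or φ ψ) ↔ (w φ ∨ w ψ)) ∧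
  (∀ φ ψ, w (.and φ ψ) ↔ (w φ ∧ w ψ)) ∧
  (∀ φ ψ, w (.imp φ ψ) ↔ (w φ → w ψ)) ∧
  (∀ φ ψ, w (.iff φ ψ) ↔ (w φ ↔ w ψ))

/-- Classical tautologies in the language of Epstein logic. -/
def Taut (φ : EFor) : Prop := ∀ w, BoolHom w → w φ

/-- The logic FΛ: least set containing CPL, the two Epstein axioms and Λ,
closed under uniform substitution and modus ponens. -/
inductive FLam (Λ : Set EFor) : EFor → Prop
  | taut {φ} : Taut φ → FLam Λ φ
  | ax1 : FLam Λ (.imp (.hook (.var 0) (.var 1)) (.imp (.var 0) (.var 1)))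
  | ax2 : FLam Λ (.iff (.tri (.var 0) (.var 1))
      (.and (.hook (.var 0) (.var 1)) (.and (.var 0) (.var 1))))
  | extra {φ} : φ ∈ Λ → FLam Λ φ
  | subst {φ} (σ : ℕ → EFor) : FLam Λ φ → FLam Λ (esubst σ φ)
  | mp {φ ψ} : FLam Λ (.imp φ ψ) → FLam Λ φ → FLam Λ ψ

/-- The base logic F. -/
def Fmem : EFor → Prop := FLam ∅

/-- Hilbert derivability from premises Γ over a logic L. -/
inductive Deriv (L : EFor → Prop) (Γ : Set EFor) : EFor → Prop
  | thm {φ} : L φ → Deriv L Γ φ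
  | prem {φ} : φ ∈ Γ → Deriv L Γ φ
  | mp {φ ψ} : Deriv L Γ (.imp φ ψ) → Deriv L Γ φ → Deriv L Γ ψ

/-- Validity on a relation: true in all models built over it. -/
def relSat (R : Set (EFor × EFor)) (φ : EFor) : Prop :=
  ∀ v : ℕ → Prop, sat ⟨v, R⟩ φ

def etop : EFor := .or (.var 0) (.neg (.var 0))
def ebot : EFor := .neg etop


lemma sat_of_S (M N : EModel) (hv : N.v = M.v)
    (h1 : M.R \ Omega M ⊆ N.R) (h2 : N.R ⊆ M.R ∪ Omega M) :
    ∀ φ, sat N φ ↔ sat M φ := by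
  intro φ
  induction φ with
  | var n => simp [sat, hv]
  | neg φ ih => simp [sat, ih]
  | or φ ψ ih1 ih2 => simp [sat, ih1, ih2]
  | and φ ψ ih1 ih2 => simp [sat, ih1, ih2]
  | imp φ ψ ih1 ih2 => simp [sat, ih1, ih2]
  | iff φ ψ ih1 ih2 => simp [sat, ih1, ih2]
  | tri φ ψ ih1 ih2 =>
    simp only [sat, ih1, ih2]
    constructor
    · rintro ⟨⟨hφ, hψ⟩, hR⟩
      refine ⟨⟨hφ, hψ⟩, ?_⟩
      rcases h2 hR with h | h
      · exact h
      · exact absurd (fun _ => hψ) h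
    · rintro ⟨⟨hφ, hψ⟩, hR⟩
      exact ⟨⟨hφ, hψ⟩, h1 ⟨hR, fun h => h (fun _ => hψ)⟩⟩
  | hook φ ψ ih1 ih2 =>
    simp only [sat, ih1, ih2]
    constructor
    · rintro ⟨himp, hR⟩
      refine ⟨himp, ?_⟩
      rcases h2 hR with h | h
      · exact h
      · exact absurd himp h
    · rintro ⟨himp, hR⟩
      exact ⟨himp, h1 ⟨hR, fun h => h himp⟩⟩

/-- N ∈ S^M iff Th(M) = Th(N); hence S^M is the equivalence class of M. -/
theorem stmt3 (M N : EModel) : N ∈ Sset M ↔ Th M = Th N := by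
  constructor
  · rintro ⟨hv, h1, h2⟩
    ext φ
    exact (sat_of_S M N hv h1 h2 φ).symm
  · intro hTh
    have hsat : ∀ φ, sat M φ ↔ sat N φ := by
      intro φ
      constructor
      · intro h; exact (hTh ▸ h : φ ∈ Th N)
      · intro h; exact (hTh ▸ h : φ ∈ Th M)
    refine ⟨?_, ?_, ?_⟩
    · funext n
      exact propext ((hsat (.var n)).symm)
    · rintro ⟨φ, ψ⟩ ⟨hR, hΩ⟩
      have himp : sat M φ → sat M ψ := not_not.mp hΩ
      have : sat M (.hook φ ψ) := ⟨himp, hR⟩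
      exact ((hsat _).mp this).2
    · rintro ⟨φ, ψ⟩ hR
      by_cases hΩ : (φ, ψ) ∈ Omega M
      · exact Or.inr hΩ
      · have himp : sat M φ → sat M ψ := not_not.mp hΩ
        have hN : sat N (.hook φ ψ) := ⟨fun h => (hsat ψ).mp (himp ((hsat φ).mpr h)), hR⟩
        exact Or.inl ((hsat _).mpr hN).2
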